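/- arXiv:2201.12343 — 2 statements merged into one kernel-verified Lean document; each statement's English description precedes it below -/
import Mathlib

section
/- For the basis functions χ_i(x) = L_i(x) − L_{i+2}(x), where L_i is the i-th Legendre polynomial, the weighted stiffness integrals a_{ij} = ∫_{−1}^{1} χ_j'(x) χ_i'(x) (x+1) dx satisfy a_{ii} = 4i + 6 and a_{i,i+1} = 2i + 4, and a_{ij} = 0 whenever |i − j| ≥ 2. -/
open Polynomial intervalIntegral

noncomputable def intInt (p : Polynomial ℝ) : ℝ := ∫ x in (-1:ℝ)..1, p.eval x

lemma ii (p : Polynomial ℝ) (a b : ℝ) : IntervalIntegrable (fun x => p.eval x) MeasureTheory.volume a b :=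
  (p.continuous_aeval).intervalIntegrable a b

lemma intInt_add (p q : Polynomial ℝ) : intInt (p + q) = intInt p + intInt q := by
  simp [intInt, integral_add (ii p _ _) (ii q _ _)]

lemma intInt_Cmul (c : ℝ) (p : Polynomial ℝ) : intInt (C c * p) = c * intInt p := by
  simp [intInt, integral_const_mul]

lemma ftc (p : Polynomial ℝ) : intInt (derivative p) = p.eval 1 - p.eval (-1) := by
  rw [intInt]
  exact integral_eq_sub_of_hasDerivAt (fun x _ => p.hasDerivAt x) (ii _ _ _)

lemma ibp_once (p q : Polynomial ℝ) :
    intInt (p * derivative q) = (p*q).eval 1 - (p*q).eval (-1) - intInt (derivative p * q) := by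
  have h := ftc (p * q)
  rw [derivative_mul, intInt_add] at h
  linarith

lemma deriv_factor (n k : ℕ) (h : k ≤ n) :
    ∃ g : Polynomial ℝ, derivative^[k] (((X:Polynomial ℝ)^2 - 1)^n)
      = ((X:Polynomial ℝ)^2 - 1)^(n-k) * g := by
  induction k with
  | zero => exact ⟨1, by simp⟩
  | succ k ih =>
    obtain ⟨g, hg⟩ := ih (Nat.le_of_succ_le h)
    set m := n - (k+1) with hm
    have h2 : n - k = m + 1 := by omega
    have h1 : derivative (((X:Polynomial ℝ)^2 - 1)^(m+1))
        = ((m : Polynomial ℝ)+1) * ((X:Polynomial ℝ)^2-1)^m * (2*X) := by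
      have hC2 : (C (2:ℝ)) = 2 := map_ofNat C 2
      rw [derivative_pow]
      simp only [derivative_sub, derivative_one, derivative_X_pow, sub_zero, hC2,
        C_eq_natCast, Nat.add_sub_cancel, pow_one]
      push_cast
      ring
    refine ⟨((m : Polynomial ℝ)+1) * (2*X) * g + ((X:Polynomial ℝ)^2-1) * derivative g, ?_⟩
    rw [Function.iterate_succ_apply', hg, h2, derivative_mul, h1]
    ring
  
lemma deriv_vanish (n k : ℕ) (h : k < n) (x : ℝ) (hx : x^2 = 1) :
    (derivative^[k] (((X:Polynomial ℝ)^2 - 1)^n)).eval x = 0 := by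
  obtain ⟨g, hg⟩ := deriv_factor n k h.le
  have h2 : n - k = (n - k - 1) + 1 := by omega
  rw [hg, h2]
  have : x * x - 1 = 0 := by nlinarith [sq_nonneg x]
  simp [pow_succ, this]

lemma ibp_key (n : ℕ) (f : Polynomial ℝ)
    (hf : ∀ k < n, (derivative^[k] f).eval 1 = 0 ∧ (derivative^[k] f).eval (-1) = 0) :
    ∀ q : Polynomial ℝ, intInt (q * derivative^[n] f) = (-1:ℝ)^n * intInt (derivative^[n] q * f) := by
  induction n with
  | zero => simp
  | succ n ih =>
    intro q
    have hb := hf n (Nat.lt_succ_self n)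
    have h1 : intInt (q * derivative^[n+1] f)
        = - intInt (derivative q * derivative^[n] f) := by
      rw [Function.iterate_succ_apply', ibp_once]
      simp [hb.1, hb.2]
    rw [h1, ih (fun k hk => hf k (hk.trans (Nat.lt_succ_self n))) (derivative q),
      ← Function.iterate_succ_apply]
    ring

/-- The `n`-th Legendre polynomial via Rodrigues' formula. -/
noncomputable def legendre (n : ℕ) : Polynomial ℝ :=
  Polynomial.C ((2 ^ n * n.factorial : ℝ)⁻¹) * Polynomial.derivative^[n] ((X ^ 2 - 1) ^ n)

noncomputable def kL (n : ℕ) : ℝ := ((2*n).descFactorial n : ℝ) / (2^n * n.factorial)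

lemma u_monic (n : ℕ) : (((X:Polynomial ℝ)^2-1)^n).Monic := by
  have : ((X:Polynomial ℝ)^2-1) = X^2 - C 1 := by simp
  rw [this]
  exact (monic_X_pow_sub_C (1:ℝ) (by norm_num)).pow n

lemma u_natDegree (n : ℕ) : (((X:Polynomial ℝ)^2-1)^n).natDegree = 2*n := by
  rw [natDegree_pow]
  have : ((X:Polynomial ℝ)^2-1) = X^2 - C 1 := by simp
  rw [this, natDegree_X_pow_sub_C]
  ring

lemma legendre_coeff_self (n : ℕ) : (legendre n).coeff n = kL n := by
  rw [legendre, coeff_C_mul, coeff_iterate_derivative]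
  have h1 : (((X:Polynomial ℝ)^2-1)^n).coeff (n + n) = 1 := by
    have := (u_monic n).leadingCoeff
    rwa [leadingCoeff, u_natDegree, two_mul] at this
  rw [h1, kL]
  simp
  ring

lemma legendre_natDegree_le (n : ℕ) : (legendre n).natDegree ≤ n := by
  refine (natDegree_C_mul_le _ _).trans ?_
  refine (natDegree_iterate_derivative _ _).trans ?_
  rw [u_natDegree]; omega

lemma kL_pos (n : ℕ) : 0 < kL n := by
  apply div_pos
  · have : (2*n).descFactorial n ≠ 0 := by
      rw [Ne, Nat.descFactorial_eq_zero_iff_lt]; omega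
    exact_mod_cast Nat.pos_of_ne_zero this
  · positivity

lemma legendre_natDegree (n : ℕ) : (legendre n).natDegree = n := by
  refine le_antisymm (legendre_natDegree_le n) ?_
  apply le_natDegree_of_ne_zero
  rw [legendre_coeff_self]
  exact (kL_pos n).ne'

lemma iterate_deriv_legendre_self (n : ℕ) :
    derivative^[n] (legendre n) = C ((n.factorial : ℝ) * kL n) := by
  have h0 : (derivative^[n] (legendre n)).natDegree ≤ 0 := by
    refine (natDegree_iterate_derivative _ _).trans ?_
    rw [legendre_natDegree]; omega
  rw [eq_C_of_natDegree_le_zero h0, coeff_iterate_derivative]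
  simp only [zero_add, legendre_coeff_self, Nat.descFactorial_self, nsmul_eq_mul]

lemma orth (q : Polynomial ℝ) (n : ℕ) (h : q.natDegree < n) : intInt (q * legendre n) = 0 := by
  have h1 : q * legendre n = C ((2 ^ n * n.factorial : ℝ)⁻¹) * (q * derivative^[n] ((X^2-1)^n)) := by
    rw [legendre]; ring
  rw [h1, intInt_Cmul,
    ibp_key n _ (fun k hk => ⟨deriv_vanish n k hk 1 (by norm_num), deriv_vanish n k hk (-1) (by norm_num)⟩) q,
    iterate_derivative_eq_zero h]
  have : intInt (0 * ((X:Polynomial ℝ)^2-1)^n) = 0 := by simp [intInt]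
  rw [this]
  simp

lemma Jval (n : ℕ) : intInt (((X:Polynomial ℝ)^2-1)^n)
    = (-1:ℝ)^n * 2^(2*n+1) * (n.factorial:ℝ)^2 / (2*n+1).factorial := by
  induction n with
  | zero => simp [intInt]; norm_num
  | succ n ih =>
    have key : derivative ((X:Polynomial ℝ) * ((X:Polynomial ℝ)^2-1)^(n+1))
        = (2*(n:Polynomial ℝ)+3) * ((X:Polynomial ℝ)^2-1)^(n+1)
          + (2*(n:Polynomial ℝ)+2) * ((X:Polynomial ℝ)^2-1)^n := by
      rw [derivative_mul, derivative_pow, derivative_X]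
      simp only [derivative_sub, derivative_one, derivative_X_pow, sub_zero,
        Nat.add_sub_cancel, pow_one, C_eq_natCast, Nat.cast_add, Nat.cast_one, Nat.cast_ofNat, C_add, C_1, map_ofNat]
      ring
    have h0 : intInt (derivative ((X:Polynomial ℝ) * ((X:Polynomial ℝ)^2-1)^(n+1))) = 0 := by
      rw [ftc]; simp
    rw [key] at h0
    have hA : (2*(n:Polynomial ℝ)+3) * ((X:Polynomial ℝ)^2-1)^(n+1) = C (2*(n:ℝ)+3) * ((X:Polynomial ℝ)^2-1)^(n+1) := by
      simp only [map_add, map_mul, map_ofNat, C_eq_natCast]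
    have hB : (2*(n:Polynomial ℝ)+2) * ((X:Polynomial ℝ)^2-1)^n = C (2*(n:ℝ)+2) * ((X:Polynomial ℝ)^2-1)^n := by
      simp only [map_add, map_mul, map_ofNat, C_eq_natCast]
    rw [hA, hB, intInt_add, intInt_Cmul, intInt_Cmul, ih] at h0
    have hsolve : intInt (((X:Polynomial ℝ)^2-1)^(n+1))
        = -(2*(n:ℝ)+2) / (2*(n:ℝ)+3) * ((-1:ℝ)^n * 2^(2*n+1) * (n.factorial:ℝ)^2 / (2*n+1).factorial) := by
      have h3 : (2*(n:ℝ)+3) ≠ 0 := by positivity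
      field_simp at h0 ⊢
      linarith
    rw [hsolve]
    have hf1 : ((2*(n+1)+1).factorial : ℝ) = (2*(n:ℝ)+3) * ((2*(n:ℝ)+2) * ((2*n+1).factorial : ℝ)) := by
      have : 2*(n+1)+1 = (2*n+1) + 1 + 1 := by ring
      rw [this, Nat.factorial_succ, Nat.factorial_succ]
      push_cast; ring
    have hf2 : ((n+1).factorial : ℝ) = ((n:ℝ)+1) * (n.factorial : ℝ) := by
      rw [Nat.factorial_succ]; push_cast; ring
    rw [hf1, hf2]
    have h3 : (2*(n:ℝ)+3) ≠ 0 := by positivity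
    have h4 : (2*(n:ℝ)+2) ≠ 0 := by positivity
    have h5 : ((2*n+1).factorial : ℝ) ≠ 0 := by exact_mod_cast (Nat.factorial_pos _).ne'
    field_simp
    ring

lemma norm_legendre (n : ℕ) : intInt (legendre n ^ 2) = 2 / (2*(n:ℝ)+1) := by
  have h1 : legendre n ^ 2 = C ((2 ^ n * n.factorial : ℝ)⁻¹) * (legendre n * derivative^[n] ((X^2-1)^n)) := by
    rw [pow_two, legendre]; ring
  rw [h1, intInt_Cmul,
    ibp_key n _ (fun k hk => ⟨deriv_vanish n k hk 1 (by norm_num), deriv_vanish n k hk (-1) (by norm_num)⟩),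
    iterate_deriv_legendre_self, intInt_Cmul, Jval]
  have hd : (n.factorial : ℝ) * ((2*n).descFactorial n : ℝ) = ((2*n).factorial : ℝ) := by
    have := Nat.factorial_mul_descFactorial (show n ≤ 2*n by omega)
    have h2 : 2*n - n = n := by omega
    rw [h2] at this
    exact_mod_cast this
  have hf : ((2*n+1).factorial : ℝ) = (2*(n:ℝ)+1) * ((2*n).factorial : ℝ) := by
    rw [Nat.factorial_succ]; push_cast; ring
  rw [kL, hf]
  have h5 : ((2*n).factorial : ℝ) ≠ 0 := by exact_mod_cast (Nat.factorial_pos _).ne'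
  have h6 : (n.factorial : ℝ) ≠ 0 := by exact_mod_cast (Nat.factorial_pos _).ne'
  have h7 : (2:ℝ)^n ≠ 0 := by positivity
  have h8 : (2*(n:ℝ)+1) ≠ 0 := by positivity
  have hm1 : ((-1:ℝ))^(2*n) = 1 := by rw [pow_mul]; norm_num
  have hsq : ((-1:ℝ))^n * ((-1:ℝ))^n = 1 := by rw [← pow_add, ← two_mul, hm1]
  have h2p : (2:ℝ)^(2*n+1) = 2 * ((2:ℝ)^n * (2:ℝ)^n) := by
    rw [pow_succ, two_mul, pow_add]; ring
  field_simp
  rw [h2p]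
  linear_combination ((n.factorial:ℝ) * ((2*n).descFactorial n : ℝ) * (2*((2:ℝ)^n*(2:ℝ)^n))) * hsq + (2 * (2:ℝ)^n * (2:ℝ)^n) * hd

lemma comp_neg_derivative (p : Polynomial ℝ) :
    derivative (p.comp (-X)) = - (derivative p).comp (-X) := by
  rw [derivative_comp]
  simp

lemma iterate_comp_neg (f : Polynomial ℝ) (n : ℕ) :
    (derivative^[n] f).comp (-X) = C ((-1:ℝ)^n) * derivative^[n] (f.comp (-X)) := by
  induction n with
  | zero => simp
  | succ n ih =>
    rw [Function.iterate_succ_apply', Function.iterate_succ_apply']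
    have h1 := comp_neg_derivative (derivative^[n] f)
    have h2 : (derivative^[n] f).comp (-X) = C ((-1:ℝ)^n) * derivative^[n] (f.comp (-X)) := ih
    have h3 := congrArg derivative h2
    rw [h1] at h3
    rw [derivative_C_mul] at h3
    have h4 : ((derivative (derivative^[n] f)).comp (-X)) = - (C ((-1:ℝ)^n) * derivative (derivative^[n] (f.comp (-X)))) := by
      rw [← h3]; ring
    rw [h4, pow_succ]
    simp
    try ring

lemma u_comp_neg (n : ℕ) : ((((X:Polynomial ℝ)^2-1)^n).comp (-X)) = ((X:Polynomial ℝ)^2-1)^n := by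
  simp [pow_comp, sub_comp, one_comp, X_comp]

lemma legendre_comp_neg (n : ℕ) : (legendre n).comp (-X) = C ((-1:ℝ)^n) * legendre n := by
  rw [legendre, mul_comp, C_comp]
  rw [iterate_comp_neg _ n]
  rw [u_comp_neg]
  try ring

lemma legendre_eval_neg (n : ℕ) (x : ℝ) : (legendre n).eval (-x) = (-1:ℝ)^n * (legendre n).eval x := by
  have h := congrArg (fun p => Polynomial.eval x p) (legendre_comp_neg n)
  simpa [eval_comp] using h

lemma intInt_odd (p : Polynomial ℝ) (h : ∀ x, p.eval (-x) = - p.eval x) : intInt p = 0 := by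
  have h1 : (∫ x in (-1:ℝ)..1, p.eval (-x)) = ∫ x in (-1:ℝ)..1, p.eval x := by
    have := intervalIntegral.integral_comp_neg (a := (-1:ℝ)) (b := 1) (f := fun t => p.eval t)
    simpa using this
  have h2 : (∫ x in (-1:ℝ)..1, p.eval (-x)) = - ∫ x in (-1:ℝ)..1, p.eval x := by
    simp only [h]
    rw [intervalIntegral.integral_neg]
  rw [intInt]
  linarith [h1.symm.trans h2]

lemma odd_term (n : ℕ) : intInt (X * legendre n * legendre n) = 0 := by
  apply intInt_odd
  intro x
  simp [legendre_eval_neg, mul_pow]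
  ring_nf
  rw [show ((-1:ℝ))^(n*2) = 1 by rw [mul_comm, pow_mul]; norm_num]
  try ring

lemma iterate_derivative_add' (k : ℕ) (p q : Polynomial ℝ) :
    derivative^[k] (p+q) = derivative^[k] p + derivative^[k] q := by
  induction k generalizing p q with
  | zero => simp
  | succ k ih =>
    rw [Function.iterate_succ_apply, Function.iterate_succ_apply, Function.iterate_succ_apply,
      derivative_add, ih]

lemma second_deriv_u (n : ℕ) :
    derivative (derivative (((X:Polynomial ℝ)^2-1)^(n+2)))
      = C ((2*(n:ℝ)+4)*(2*(n:ℝ)+3)) * ((X:Polynomial ℝ)^2-1)^(n+1)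
        + C ((2*(n:ℝ)+4)*(2*(n:ℝ)+2)) * ((X:Polynomial ℝ)^2-1)^n := by
  have e1 : n + 2 - 1 = n + 1 := by omega
  have e2 : n + 1 - 1 = n := by omega
  simp only [map_mul, map_add, map_ofNat, C_eq_natCast, derivative_pow, derivative_mul,
    derivative_sub, derivative_one, derivative_X_pow, derivative_natCast, derivative_C,
    sub_zero, pow_one, e1, e2, Nat.cast_add, Nat.cast_ofNat, Nat.cast_one, zero_mul, mul_zero,
    zero_add, add_zero, derivative_X, derivative_ofNat, C_1, one_mul, mul_one]
  push_cast
  ring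

lemma legendre_deriv_rec (n : ℕ) :
    derivative (legendre (n+2)) = C (2*(n:ℝ)+3) * legendre (n+1) + derivative (legendre n) := by
  have hit : ∀ (m : ℕ) (p : Polynomial ℝ), derivative^[m+1] p = derivative^[m] (derivative p) :=
    fun m p => Function.iterate_succ_apply derivative m p
  have lhs : derivative (legendre (n+2))
      = C ((2 ^ (n+2) * (n+2).factorial : ℝ)⁻¹)
        * derivative^[n+1] (derivative (derivative (((X:Polynomial ℝ)^2-1)^(n+2)))) := by
    rw [legendre, derivative_C_mul]
    congr 1
    rw [← hit, ← hit]
    rw [← Function.iterate_succ_apply' derivative (n+2)]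
  rw [lhs, second_deriv_u, iterate_derivative_add' , iterate_derivative_C_mul, iterate_derivative_C_mul]
  have rhs1 : C (2*(n:ℝ)+3) * legendre (n+1)
      = C ((2*(n:ℝ)+3) * (2 ^ (n+1) * (n+1).factorial : ℝ)⁻¹) * derivative^[n+1] (((X:Polynomial ℝ)^2-1)^(n+1)) := by
    rw [legendre, C_mul]; ring
  have rhs2 : derivative (legendre n)
      = C ((2 ^ n * n.factorial : ℝ)⁻¹) * derivative^[n+1] (((X:Polynomial ℝ)^2-1)^n) := by
    rw [legendre, derivative_C_mul, ← Function.iterate_succ_apply' derivative n]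
  rw [rhs1, rhs2, mul_add, ← mul_assoc, ← mul_assoc, ← C_mul, ← C_mul]
  have hfac2 : ((n+2).factorial : ℝ) = ((n:ℝ)+2) * (((n:ℝ)+1) * (n.factorial : ℝ)) := by
    rw [Nat.factorial_succ, Nat.factorial_succ]; push_cast; ring
  have hfac1 : ((n+1).factorial : ℝ) = ((n:ℝ)+1) * (n.factorial : ℝ) := by
    rw [Nat.factorial_succ]; push_cast; ring
  have hnf : (n.factorial : ℝ) ≠ 0 := by exact_mod_cast (Nat.factorial_pos _).ne'
  have h2p : (2:ℝ)^n ≠ 0 := by positivity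
  have c1 : (2 ^ (n+2) * ((n+2).factorial : ℝ))⁻¹ * ((2*(n:ℝ)+4)*(2*(n:ℝ)+3))
      = (2*(n:ℝ)+3) * (2 ^ (n+1) * ((n+1).factorial : ℝ))⁻¹ := by
    rw [hfac2, hfac1, pow_succ, pow_succ]
    field_simp
    ring
  have c2 : (2 ^ (n+2) * ((n+2).factorial : ℝ))⁻¹ * ((2*(n:ℝ)+4)*(2*(n:ℝ)+2))
      = (2 ^ n * (n.factorial : ℝ))⁻¹ := by
    rw [hfac2, pow_succ, pow_succ]
    field_simp
    ring
  rw [c1, c2]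

lemma kL_ratio (n : ℕ) : kL (n+1) = (((n:ℝ)+2)/(2*(n:ℝ)+3)) * kL (n+2) := by
  have hd : ∀ m : ℕ, (m.factorial : ℝ) * ((2*m).descFactorial m : ℝ) = ((2*m).factorial : ℝ) := by
    intro m
    have := Nat.factorial_mul_descFactorial (show m ≤ 2*m by omega)
    have h2 : 2*m - m = m := by omega
    rw [h2] at this
    exact_mod_cast this
  have e1 := hd (n+1)
  have e2 := hd (n+2)
  have hfn1 : (0:ℝ) < ((n+1).factorial : ℝ) := by exact_mod_cast Nat.factorial_pos _
  have hfn2 : (0:ℝ) < ((n+2).factorial : ℝ) := by exact_mod_cast Nat.factorial_pos _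
  have hf24 : ((2*(n+2)).factorial : ℝ)
      = (2*(n:ℝ)+4) * ((2*(n:ℝ)+3) * ((2*(n+1)).factorial : ℝ)) := by
    have h1 : 2*(n+2) = (2*(n+1)+1)+1 := by omega
    rw [h1, Nat.factorial_succ, Nat.factorial_succ]
    push_cast; ring
  have hf2 : ((n+2).factorial : ℝ) = ((n:ℝ)+2) * ((n+1).factorial : ℝ) := by
    rw [show n+2 = (n+1)+1 by omega, Nat.factorial_succ]; push_cast; ring
  have hD1 : (((2*(n+1)).descFactorial (n+1) : ℕ):ℝ)
      = ((2*(n+1)).factorial : ℝ) / ((n+1).factorial : ℝ) := by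
    rw [eq_div_iff hfn1.ne']; linear_combination e1
  have hD2 : (((2*(n+2)).descFactorial (n+2) : ℕ):ℝ)
      = ((2*(n+2)).factorial : ℝ) / ((n+2).factorial : ℝ) := by
    rw [eq_div_iff hfn2.ne']; linear_combination e2
  rw [kL, kL, hD1, hD2, hf24, hf2]
  have hG1 : (0:ℝ) < ((2*(n+1)).factorial : ℝ) := by exact_mod_cast Nat.factorial_pos _
  have h1 : (2:ℝ)^(n+1) ≠ 0 := by positivity
  have h2 : (2:ℝ)^(n+2) ≠ 0 := by positivity
  have h3 : (2*(n:ℝ)+3) ≠ 0 := by positivity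
  have h4 : ((n:ℝ)+2) ≠ 0 := by positivity
  rw [pow_succ ((2:ℝ)) (n+1)]
  field_simp
  ring

lemma decomposition_natDegree (n : ℕ) :
    (X * legendre (n+1) - C (((n:ℝ)+2)/(2*(n:ℝ)+3)) * legendre (n+2)).natDegree ≤ n+1 := by
  rw [natDegree_le_iff_coeff_eq_zero]
  intro m hm
  rw [coeff_sub, coeff_C_mul]
  rcases eq_or_lt_of_le (show n+2 ≤ m by omega) with h | h
  · subst h
    rw [show n+2 = (n+1)+1 from rfl, coeff_X_mul, legendre_coeff_self, legendre_coeff_self,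
      kL_ratio]
    ring
  · have h1 : (X * legendre (n+1)).coeff m = 0 := by
      rcases Nat.exists_eq_succ_of_ne_zero (show m ≠ 0 by omega) with ⟨k, rfl⟩
      rw [coeff_X_mul]
      exact coeff_eq_zero_of_natDegree_lt (by rw [legendre_natDegree]; omega)
    have h2 : (legendre (n+2)).coeff m = 0 :=
      coeff_eq_zero_of_natDegree_lt (by rw [legendre_natDegree]; omega)
    rw [h1, h2]; ring

lemma intInt_congr {p q : Polynomial ℝ} (h : p = q) : intInt p = intInt q := by rw [h]

lemma cross (n : ℕ) : intInt (X * legendre (n+1) * legendre (n+2))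
    = (((n:ℝ)+2)/(2*(n:ℝ)+3)) * (2/(2*(n:ℝ)+5)) := by
  set c : ℝ := ((n:ℝ)+2)/(2*(n:ℝ)+3) with hc
  set r : Polynomial ℝ := X * legendre (n+1) - C c * legendre (n+2) with hr
  have hsplit : X * legendre (n+1) * legendre (n+2)
      = C c * legendre (n+2)^2 + r * legendre (n+2) := by
    rw [hr]; ring
  rw [intInt_congr hsplit, intInt_add, intInt_Cmul, norm_legendre,
    orth r (n+2) (by
      rw [hr]
      exact lt_of_le_of_lt (decomposition_natDegree n) (by omega))]
  have : (2*((n:ℝ)+2)+1) = 2*(n:ℝ)+5 := by push_cast; ring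
  rw [show ((n:ℕ)+2 : ℕ) = n+2 from rfl]
  push_cast
  rw [show 2*((n:ℝ)+2)+1 = 2*(n:ℝ)+5 by ring]
  ring

/-- χ_i = L_i − L_{i+2}. -/
noncomputable def chi (i : ℕ) : Polynomial ℝ := legendre i - legendre (i + 2)

lemma chi_deriv (i : ℕ) : derivative (chi i) = C (-(2*(i:ℝ)+3)) * legendre (i+1) := by
  rw [chi, derivative_sub, legendre_deriv_rec, map_neg]
  ring

/-- a_{ij} = ∫_{-1}^1 χ_j' χ_i' (x+1) dx. -/
noncomputable def aMat (i j : ℕ) : ℝ :=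
  ∫ x in (-1 : ℝ)..1,
    (Polynomial.derivative (chi j)).eval x * (Polynomial.derivative (chi i)).eval x * (x + 1)

lemma aMat_eq (i j : ℕ) :
    aMat i j = (2*(j:ℝ)+3) * (2*(i:ℝ)+3)
      * intInt (legendre (j+1) * legendre (i+1) * X + legendre (j+1) * legendre (i+1)) := by
  have h1 : aMat i j = intInt (derivative (chi j) * derivative (chi i) * (X + 1)) := by
    rw [aMat, intInt]
    congr 1
    funext x
    simp [eval_mul, eval_add]
  rw [h1, chi_deriv, chi_deriv]
  have h2 : C (-(2*(j:ℝ)+3)) * legendre (j+1) * (C (-(2*(i:ℝ)+3)) * legendre (i+1)) * (X + 1)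
      = C ((2*(j:ℝ)+3) * (2*(i:ℝ)+3)) * (legendre (j+1) * legendre (i+1) * X + legendre (j+1) * legendre (i+1)) := by
    rw [C_mul, map_neg, map_neg]
    ring
  rw [intInt_congr h2, intInt_Cmul]

theorem stiffness_entries (i j : ℕ) :
    aMat i i = 4 * (i : ℝ) + 6 ∧
    aMat i (i + 1) = 2 * (i : ℝ) + 4 ∧
    (2 ≤ |(i : ℤ) - (j : ℤ)| → aMat i j = 0) := by
  refine ⟨?_, ?_, ?_⟩
  · rw [aMat_eq, intInt_add]
    have h1 : intInt (legendre (i+1) * legendre (i+1) * X) = 0 := by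
      rw [intInt_congr (show legendre (i+1) * legendre (i+1) * X
        = X * legendre (i+1) * legendre (i+1) by ring)]
      exact odd_term (i+1)
    have h2 : intInt (legendre (i+1) * legendre (i+1)) = 2 / (2*((i:ℝ)+1)+1) := by
      rw [intInt_congr (show legendre (i+1) * legendre (i+1) = legendre (i+1)^2 by ring),
        norm_legendre]
      push_cast
      ring_nf
    rw [h1, h2]
    have h3 : 2*((i:ℝ)+1)+1 ≠ 0 := by positivity
    field_simp
    ring
  · rw [aMat_eq, intInt_add]
    have h1 : intInt (legendre (i+1+1) * legendre (i+1) * X)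
        = (((i:ℝ)+2)/(2*(i:ℝ)+3)) * (2/(2*(i:ℝ)+5)) := by
      rw [intInt_congr (show legendre (i+1+1) * legendre (i+1) * X
        = X * legendre (i+1) * legendre (i+2) by ring_nf)]
      exact cross i
    have h2 : intInt (legendre (i+1+1) * legendre (i+1)) = 0 := by
      rw [intInt_congr (show legendre (i+1+1) * legendre (i+1)
        = legendre (i+1) * legendre (i+2) by ring_nf)]
      exact orth _ _ (by rw [legendre_natDegree]; omega)
    rw [h1, h2]
    have h3 : 2*(i:ℝ)+3 ≠ 0 := by positivity
    have h4 : 2*(i:ℝ)+5 ≠ 0 := by positivity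
    push_cast
    field_simp
    ring
  · intro hij
    rw [aMat_eq]
    have hdX : ((X:Polynomial ℝ)+1).natDegree = 1 := by
      simpa using natDegree_X_add_C (1:ℝ)
    have hcase : j+2 ≤ i ∨ i+2 ≤ j := by
      rcases le_abs.mp hij with h | h <;> omega
    rcases hcase with h | h
    · have hdeg : (legendre (j+1) * ((X:Polynomial ℝ)+1)).natDegree < i+1 := by
        refine lt_of_le_of_lt (natDegree_mul_le) ?_
        rw [legendre_natDegree, hdX]
        omega
      rw [intInt_congr (show legendre (j+1) * legendre (i+1) * X + legendre (j+1) * legendre (i+1)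
        = (legendre (j+1) * ((X:Polynomial ℝ)+1)) * legendre (i+1) by ring),
        orth _ _ hdeg, mul_zero]
    · have hdeg : (legendre (i+1) * ((X:Polynomial ℝ)+1)).natDegree < j+1 := by
        refine lt_of_le_of_lt (natDegree_mul_le) ?_
        rw [legendre_natDegree, hdX]
        omega
      rw [intInt_congr (show legendre (j+1) * legendre (i+1) * X + legendre (j+1) * legendre (i+1)
        = (legendre (i+1) * ((X:Polynomial ℝ)+1)) * legendre (j+1) by ring),
        orth _ _ hdeg, mul_zero]
end

section
/- For the basis functions χ_i(x) = L_i(x) − L_{i+2}(x), the weighted integrals b_{ij} = ∫_{−1}^{1} (1/(x+1)) χ_j(x) χ_i(x) dx are finite and satisfy b_{ii} = 2(2i+3)/((i+1)(i+2)) and b_{i,i+1} = −2/(i+2), with b_{ij} = 0 for |i − j| ≥ 2. -/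
open Polynomial intervalIntegral MeasureTheory

/-- b_{ij} = ∫_{-1}^1 (1/(x+1)) χ_j χ_i dx. -/
noncomputable def bMat (i j : ℕ) : ℝ :=
  ∫ x in (-1 : ℝ)..1, (x + 1)⁻¹ * (chi j).eval x * (chi i).eval x

namespace SME

noncomputable def Lint (p q : Polynomial ℝ) : ℝ := ∫ x in (-1:ℝ)..1, p.eval x * q.eval x

lemma Lint_def (p q : Polynomial ℝ) : Lint p q = ∫ x in (-1:ℝ)..1, p.eval x * q.eval x := rfl

lemma poly_ii (p : Polynomial ℝ) (a b : ℝ) :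
    IntervalIntegrable (fun x => p.eval x) volume a b :=
  p.continuous.intervalIntegrable a b

lemma poly_ii2 (p q : Polynomial ℝ) (a b : ℝ) :
    IntervalIntegrable (fun x => p.eval x * q.eval x) volume a b :=
  (p.continuous.mul q.continuous).intervalIntegrable a b

lemma integral_derivative (p : Polynomial ℝ) :
    ∫ x in (-1:ℝ)..1, (derivative p).eval x = p.eval 1 - p.eval (-1) :=
  intervalIntegral.integral_eq_sub_of_hasDerivAt (fun x _ => p.hasDerivAt x) (poly_ii _ _ _)

lemma Lint_comm (p q : Polynomial ℝ) : Lint p q = Lint q p := by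
  unfold Lint; congr 1; ext x; ring

lemma Lint_add_right (p q r : Polynomial ℝ) : Lint p (q + r) = Lint p q + Lint p r := by
  unfold Lint
  simp only [eval_add, mul_add]
  exact integral_add (poly_ii2 _ _ _ _) (poly_ii2 _ _ _ _)

lemma Lint_sub_right (p q r : Polynomial ℝ) : Lint p (q - r) = Lint p q - Lint p r := by
  unfold Lint
  simp only [eval_sub, mul_sub]
  exact integral_sub (poly_ii2 _ _ _ _) (poly_ii2 _ _ _ _)

lemma Lint_C_mul_right (p q : Polynomial ℝ) (a : ℝ) : Lint p (C a * q) = a * Lint p q := by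
  unfold Lint
  rw [← intervalIntegral.integral_const_mul]
  congr 1; ext x; simp; ring

lemma Lint_C_mul_left (p q : Polynomial ℝ) (a : ℝ) : Lint (C a * p) q = a * Lint p q := by
  rw [Lint_comm, Lint_C_mul_right, Lint_comm]

lemma Lint_sub_left (p q r : Polynomial ℝ) : Lint (p - q) r = Lint p r - Lint q r := by
  rw [Lint_comm, Lint_sub_right, Lint_comm p r, Lint_comm q r]

lemma Lint_mul_assoc (a b c : Polynomial ℝ) : Lint (a * b) c = Lint b (a * c) := by
  unfold Lint; congr 1; ext x; simp; ring

-- W facts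
lemma W_factor (n : ℕ) : ((X:Polynomial ℝ)^2 - 1)^n = (X - C 1)^n * (X - C (-1))^n := by
  rw [← mul_pow]; congr 1; simp; ring

lemma W_ne_zero (n : ℕ) : ((X:Polynomial ℝ)^2 - 1)^n ≠ 0 := by
  apply pow_ne_zero
  intro h
  have := congrArg (Polynomial.eval (0:ℝ)) h
  simp at this

lemma W_deriv_root (n k : ℕ) (hk : k < n) (t : ℝ) (ht : t = 1 ∨ t = -1) :
    (derivative^[k] (((X:Polynomial ℝ)^2 - 1)^n)).eval t = 0 := by
  apply Polynomial.isRoot_iterate_derivative_of_lt_rootMultiplicity (n := k)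
  apply lt_of_lt_of_le (Nat.lt_of_lt_of_le hk (le_refl n))
  rw [Polynomial.le_rootMultiplicity_iff (W_ne_zero n)]
  rcases ht with h | h <;> subst h
  · rw [W_factor]; exact Dvd.intro _ rfl
  · rw [W_factor]; exact Dvd.intro_left _ rfl

lemma Lint_eq_integral_mul (p q : Polynomial ℝ) : Lint p q = ∫ x in (-1:ℝ)..1, (p * q).eval x := by
  rw [Lint_def]; congr 1; ext x; simp

lemma ibp_step (n k : ℕ) (hk : k < n) (p : Polynomial ℝ) :
    Lint (derivative^[k+1] (((X:Polynomial ℝ)^2 - 1)^n)) p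
      = - Lint (derivative^[k] (((X:Polynomial ℝ)^2 - 1)^n)) (derivative p) := by
  set W : Polynomial ℝ := ((X:Polynomial ℝ)^2 - 1)^n with hW
  have h := integral_derivative (derivative^[k] W * p)
  rw [derivative_mul] at h
  have hsplit : ∫ x in (-1:ℝ)..1, (derivative (derivative^[k] W) * p + derivative^[k] W * derivative p).eval x
      = (∫ x in (-1:ℝ)..1, (derivative (derivative^[k] W) * p).eval x)
        + ∫ x in (-1:ℝ)..1, (derivative^[k] W * derivative p).eval x := by
    simp only [eval_add, eval_mul]
    exact integral_add (poly_ii2 _ _ _ _) (poly_ii2 _ _ _ _)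
  rw [hsplit] at h
  have hb1 : (derivative^[k] W * p).eval 1 = 0 := by
    rw [eval_mul, W_deriv_root n k hk 1 (Or.inl rfl), zero_mul]
  have hb2 : (derivative^[k] W * p).eval (-1) = 0 := by
    rw [eval_mul, W_deriv_root n k hk (-1) (Or.inr rfl), zero_mul]
  rw [hb1, hb2] at h
  rw [Lint_eq_integral_mul, Lint_eq_integral_mul, Function.iterate_succ_apply']
  linarith [h]

lemma ibp (n : ℕ) (p : Polynomial ℝ) :
    Lint (derivative^[n] (((X:Polynomial ℝ)^2 - 1)^n)) p
      = (-1)^n * Lint (((X:Polynomial ℝ)^2 - 1)^n) (derivative^[n] p) := by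
  suffices h : ∀ k, k ≤ n → ∀ p : Polynomial ℝ,
      Lint (derivative^[n] (((X:Polynomial ℝ)^2 - 1)^n)) p
        = (-1)^k * Lint (derivative^[n-k] (((X:Polynomial ℝ)^2 - 1)^n)) (derivative^[k] p) by
    have := h n le_rfl p
    simpa using this
  intro k
  induction k with
  | zero => intro _ p; simp
  | succ k ih =>
    intro hk p
    have hk' : k ≤ n := Nat.le_of_succ_le hk
    rw [ih hk' p]
    have hsub : n - k = (n - (k+1)) + 1 := by omega
    have hlt : n - (k+1) < n := by omega
    rw [hsub, ibp_step n (n - (k+1)) hlt]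
    rw [Function.iterate_succ_apply']
    ring

lemma iterate_derivative_eq_zero' (p : Polynomial ℝ) (n : ℕ) (h : p.natDegree < n) :
    derivative^[n] p = 0 := Polynomial.iterate_derivative_eq_zero h

lemma Lint_zero_right (p : Polynomial ℝ) : Lint p 0 = 0 := by
  rw [Lint_def]; simp

lemma legendre_orth (n : ℕ) (p : Polynomial ℝ) (hp : p.natDegree < n) :
    Lint (legendre n) p = 0 := by
  unfold legendre
  rw [Lint_C_mul_left, ibp, iterate_derivative_eq_zero' p n hp, Lint_zero_right]
  ring

lemma W_monic (n : ℕ) : (((X:Polynomial ℝ)^2 - 1)^n).Monic := by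
  apply Polynomial.Monic.pow
  have : ((X:Polynomial ℝ)^2 - 1) = X^2 - C 1 := by simp
  rw [this]
  exact Polynomial.monic_X_pow_sub_C 1 (by norm_num)

lemma W_natDegree (n : ℕ) : (((X:Polynomial ℝ)^2 - 1)^n).natDegree = 2 * n := by
  rw [Polynomial.natDegree_pow]
  have : ((X:Polynomial ℝ)^2 - 1) = X^2 - C 1 := by simp
  rw [this, Polynomial.natDegree_X_pow_sub_C]
  ring

lemma legendre_natDegree_le (n : ℕ) : (legendre n).natDegree ≤ n := by
  unfold legendre
  refine le_trans (Polynomial.natDegree_C_mul_le _ _) ?_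
  refine le_trans (Polynomial.natDegree_iterate_derivative _ _) ?_
  rw [W_natDegree]; omega

lemma legendre_coeff_top (n : ℕ) :
    (legendre n).coeff n = ((2*n).factorial : ℝ) / (2^n * (n.factorial:ℝ)^2) := by
  unfold legendre
  rw [Polynomial.coeff_C_mul, Polynomial.coeff_iterate_derivative]
  have hc : (((X:Polynomial ℝ)^2 - 1)^n).coeff (n + n) = 1 := by
    have := (W_monic n).leadingCoeff
    rw [Polynomial.leadingCoeff, W_natDegree] at this
    rw [show n + n = 2*n by ring, this]
  rw [hc]
  have hd : (n + n).descFactorial n * n.factorial = (2*n).factorial := by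
    rw [Nat.descFactorial_eq_factorial_mul_choose]
    have := Nat.choose_mul_factorial_mul_factorial (show n ≤ 2*n by omega)
    rw [show 2*n - n = n by omega] at this
    calc n.factorial * (n+n).choose n * n.factorial = (2*n).choose n * n.factorial * n.factorial := by
          rw [show n + n = 2*n by ring]; ring
      _ = (2*n).factorial := this
  have hne : (n.factorial : ℝ) ≠ 0 := Nat.cast_ne_zero.mpr (Nat.factorial_ne_zero n)
  have h2 : (2:ℝ)^n ≠ 0 := by positivity
  field_simp
  rw [← hd]
  push_cast
  ring

lemma legendre_coeff_top_ne (n : ℕ) : (legendre n).coeff n ≠ 0 := by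
  rw [legendre_coeff_top]
  have h1 : ((2*n).factorial : ℝ) > 0 := by positivity
  have h2 : (2:ℝ)^n * (n.factorial:ℝ)^2 > 0 := by positivity
  positivity

lemma legendre_natDegree (n : ℕ) : (legendre n).natDegree = n :=
  le_antisymm (legendre_natDegree_le n) (Polynomial.le_natDegree_of_ne_zero (legendre_coeff_top_ne n))

lemma iterate_derivative_W_self (n : ℕ) :
    derivative^[2*n] (((X:Polynomial ℝ)^2 - 1)^n) = C (((2*n).factorial : ℝ)) := by
  have hdeg : (derivative^[2*n] (((X:Polynomial ℝ)^2 - 1)^n)).natDegree ≤ 0 := by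
    refine le_trans (Polynomial.natDegree_iterate_derivative _ _) ?_
    rw [W_natDegree]; omega
  rw [Polynomial.eq_C_of_natDegree_le_zero hdeg]
  congr 1
  rw [Polynomial.coeff_iterate_derivative]
  have hc : (((X:Polynomial ℝ)^2 - 1)^n).coeff (0 + 2*n) = 1 := by
    have := (W_monic n).leadingCoeff
    rw [Polynomial.leadingCoeff, W_natDegree] at this
    rw [zero_add, this]
  rw [hc, nsmul_eq_mul, mul_one, zero_add, Nat.descFactorial_self]

lemma wallis (n : ℕ) : (∫ x in (-1:ℝ)..1, ((1 - (X:Polynomial ℝ)^2)^n).eval x)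
    = 2^(2*n+1) * ((n.factorial:ℝ))^2 / ((2*n+1).factorial : ℝ) := by
  induction n with
  | zero => norm_num
  | succ n ih =>
    have key : derivative ((X : Polynomial ℝ) * (1 - X^2)^(n+1))
        = C (2*(n:ℝ)+3) * (1 - X^2)^(n+1) - C (2*(n:ℝ)+2) * (1 - X^2)^n := by
      rw [derivative_mul, derivative_pow, derivative_X]
      have h1 : derivative ((1:Polynomial ℝ) - X^2) = C (-2) * X := by
        simp [derivative_X_pow]
        rw [one_add_one_eq_two, map_ofNat]
      rw [h1]
      simp only [map_add, map_mul, map_ofNat, map_natCast, map_neg, C_1, Nat.cast_add,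
        Nat.cast_one, Nat.add_sub_cancel]
      ring
    have hint := integral_derivative ((X : Polynomial ℝ) * (1 - X^2)^(n+1))
    rw [key] at hint
    have hev1 : (((X : Polynomial ℝ)) * (1 - X^2)^(n+1)).eval 1 = 0 := by simp
    have hev2 : (((X : Polynomial ℝ)) * (1 - X^2)^(n+1)).eval (-1) = 0 := by simp
    rw [hev1, hev2] at hint
    have hsplit : ∫ x in (-1:ℝ)..1,
        ((C (2*(n:ℝ)+3) * (1 - X^2)^(n+1) - C (2*(n:ℝ)+2) * (1 - X^2)^n : Polynomial ℝ)).eval x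
        = (2*(n:ℝ)+3) * (∫ x in (-1:ℝ)..1, ((1 - (X:Polynomial ℝ)^2)^(n+1)).eval x)
          - (2*(n:ℝ)+2) * (∫ x in (-1:ℝ)..1, ((1 - (X:Polynomial ℝ)^2)^n).eval x) := by
      simp only [eval_sub, eval_mul, eval_C]
      rw [intervalIntegral.integral_sub, intervalIntegral.integral_const_mul,
        intervalIntegral.integral_const_mul]
      · exact (Continuous.intervalIntegrable (by continuity) _ _)
      · exact (Continuous.intervalIntegrable (by continuity) _ _)
    rw [hsplit] at hint
    have h3 : (2*(n:ℝ)+3) ≠ 0 := by positivity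
    have heq : (∫ x in (-1:ℝ)..1, ((1 - (X:Polynomial ℝ)^2)^(n+1)).eval x)
        = (2*(n:ℝ)+2) / (2*(n:ℝ)+3) * (2^(2*n+1) * ((n.factorial:ℝ))^2 / ((2*n+1).factorial : ℝ)) := by
      rw [← ih]; field_simp at hint ⊢; linarith
    rw [heq]
    have hf1 : ((2*(n+1)+1).factorial : ℝ) = (2*(n:ℝ)+3) * ((2*(n:ℝ)+2) * ((2*n+1).factorial : ℝ)) := by
      rw [show 2*(n+1)+1 = (2*n+1) + 1 + 1 by ring, Nat.factorial_succ, Nat.factorial_succ]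
      push_cast; ring
    have hf2 : ((n+1).factorial : ℝ) = ((n:ℝ)+1) * (n.factorial : ℝ) := by
      rw [Nat.factorial_succ]; push_cast; ring
    rw [hf1, hf2]
    have hne1 : ((2*n+1).factorial : ℝ) ≠ 0 := Nat.cast_ne_zero.mpr (Nat.factorial_ne_zero _)
    have hne2 : (2*(n:ℝ)+2) ≠ 0 := by positivity
    field_simp
    ring

lemma Lint_one_right (p : Polynomial ℝ) : Lint p 1 = ∫ x in (-1:ℝ)..1, p.eval x := by
  rw [Lint_def]; simp

lemma legendre_norm (n : ℕ) :
    Lint (legendre n) (legendre n) = 2 / (2*(n:ℝ)+1) := by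
  have hdd : derivative^[n] (C ((2 ^ n * (n.factorial:ℝ))⁻¹) * derivative^[n] (((X:Polynomial ℝ)^2 - 1)^n))
      = C ((2 ^ n * (n.factorial:ℝ))⁻¹ * ((2*n).factorial : ℝ)) := by
    rw [Polynomial.iterate_derivative_C_mul, ← Function.iterate_add_apply,
      show n + n = 2*n by ring, iterate_derivative_W_self, ← C_mul]
  have hW : ∫ x in (-1:ℝ)..1, (((X:Polynomial ℝ)^2 - 1)^n).eval x
      = (-1)^n * (2^(2*n+1) * ((n.factorial:ℝ))^2 / ((2*n+1).factorial : ℝ)) := by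
    rw [← wallis]
    have : ((X:Polynomial ℝ)^2 - 1)^n = (-1)^n * (1 - X^2)^n := by
      have h0 : ((X:Polynomial ℝ)^2 - 1) = -(1 - X^2) := by ring
      rw [h0, neg_pow]
    rw [this, ← intervalIntegral.integral_const_mul]
    congr 1; ext x; simp
  rw [show legendre n = C ((2 ^ n * (n.factorial:ℝ))⁻¹) * derivative^[n] (((X:Polynomial ℝ)^2 - 1)^n) from rfl]
  rw [Lint_C_mul_left, ibp, hdd]
  rw [show (C ((2 ^ n * (n.factorial:ℝ))⁻¹ * ((2*n).factorial : ℝ)) : Polynomial ℝ)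
    = C ((2 ^ n * (n.factorial:ℝ))⁻¹ * ((2*n).factorial : ℝ)) * 1 by ring]
  rw [Lint_C_mul_right, Lint_one_right, hW]
  have hm1 : ((-1:ℝ))^n * ((-1:ℝ))^n = 1 := by
    rw [← pow_add]; exact Even.neg_one_pow ⟨n, rfl⟩
  have key : ∀ a b I : ℝ, a * ((-1:ℝ)^n * (b * ((-1:ℝ)^n * I))) = a * b * I := by
    intro a b I
    have h : a * ((-1:ℝ)^n * (b * ((-1:ℝ)^n * I))) = ((-1:ℝ)^n * (-1:ℝ)^n) * (a*b*I) := by ring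
    rw [h, hm1, one_mul]
  rw [key]
  have h1 : ((2*n+1).factorial : ℝ) = (2*(n:ℝ)+1) * ((2*n).factorial : ℝ) := by
    rw [Nat.factorial_succ]; push_cast; ring
  have hne : (n.factorial : ℝ) ≠ 0 := Nat.cast_ne_zero.mpr (Nat.factorial_ne_zero n)
  have hne2 : ((2*n).factorial : ℝ) ≠ 0 := Nat.cast_ne_zero.mpr (Nat.factorial_ne_zero _)
  have hne3 : (2:ℝ)^n ≠ 0 := by positivity
  have hne4 : (2*(n:ℝ)+1) ≠ 0 := by positivity
  rw [h1]
  have h2 : (2:ℝ)^(2*n+1) = 2 * ((2:ℝ)^n)^2 := by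
    rw [pow_succ, pow_mul']; ring
  rw [h2]
  field_simp

lemma legendre_eval_one (n : ℕ) : (legendre n).eval 1 = 1 := by
  unfold legendre
  rw [eval_mul, eval_C, W_factor, Polynomial.iterate_derivative_mul, eval_finset_sum]
  rw [Finset.sum_eq_single 0]
  · rw [Nat.choose_zero_right, one_smul, Nat.sub_zero, Function.iterate_zero_apply,
      Polynomial.iterate_derivative_X_sub_pow_self, eval_mul]
    have hne : (n.factorial : ℝ) ≠ 0 := Nat.cast_ne_zero.mpr (Nat.factorial_ne_zero n)
    have hne3 : (2:ℝ)^n ≠ 0 := by positivity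
    simp only [eval_natCast, eval_pow, eval_sub, eval_X, eval_C, sub_neg_eq_add]
    norm_num
    field_simp
  · intro k hk hk0
    rw [Polynomial.iterate_derivative_X_sub_pow]
    have hkn : k ≤ n := Nat.lt_succ_iff.mp (Finset.mem_range.mp hk)
    have h2 : n - (n - k) = k := by omega
    rw [h2]
    simp [zero_pow hk0]
  · intro h; simp at h

lemma legendre_eval_neg_one (n : ℕ) : (legendre n).eval (-1) = (-1)^n := by
  unfold legendre
  rw [eval_mul, eval_C, W_factor, Polynomial.iterate_derivative_mul, eval_finset_sum]
  rw [Finset.sum_eq_single n]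
  · rw [Nat.choose_self, one_smul, Nat.sub_self, Function.iterate_zero_apply,
      Polynomial.iterate_derivative_X_sub_pow_self, eval_mul]
    have hne : (n.factorial : ℝ) ≠ 0 := Nat.cast_ne_zero.mpr (Nat.factorial_ne_zero n)
    have hne3 : (2:ℝ)^n ≠ 0 := by positivity
    simp only [eval_natCast, eval_pow, eval_sub, eval_X, eval_C]
    rw [show (-1:ℝ) - 1 = (-1) * 2 by ring, mul_pow]
    field_simp
  · intro k hk hk0
    rw [Polynomial.iterate_derivative_X_sub_pow (n := n) (k := k)]
    have hkn : k ≤ n := Nat.lt_succ_iff.mp (Finset.mem_range.mp hk)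
    have hnk0 : n - k ≠ 0 := by omega
    simp [zero_pow hnk0]
  · intro h; simp at h

lemma Lint_add_left (p q r : Polynomial ℝ) : Lint (p + q) r = Lint p r + Lint q r := by
  rw [Lint_comm, Lint_add_right, Lint_comm p r, Lint_comm q r]

lemma eq_zero_of_Lint_self (p : Polynomial ℝ) (h : Lint p p = 0) : p = 0 := by
  by_contra hp
  have hle : (-1:ℝ) ≤ 1 := by norm_num
  have hi : IntegrableOn (fun x => p.eval x * p.eval x) (Set.Ioc (-1:ℝ) 1) volume :=
    (poly_ii2 p p (-1) 1).1
  have h0 : ∫ x in Set.Ioc (-1:ℝ) 1, p.eval x * p.eval x = 0 := by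
    rw [Lint_def] at h
    rwa [intervalIntegral.integral_of_le hle] at h
  have hnonneg : 0 ≤ fun x => p.eval x * p.eval x := fun x => mul_self_nonneg _
  have hae := (MeasureTheory.integral_eq_zero_iff_of_nonneg hnonneg hi).mp h0
  have hcont : Continuous fun x : ℝ => p.eval x * p.eval x := p.continuous.mul p.continuous
  have hmeas : volume ({x : ℝ | p.eval x * p.eval x ≠ 0} ∩ Set.Ioc (-1:ℝ) 1) = 0 := by
    have h1 := MeasureTheory.ae_iff.mp hae
    rw [MeasureTheory.Measure.restrict_apply] at h1
    · exact h1
    · exact (isOpen_compl_iff.mpr (isClosed_eq hcont continuous_const)).measurableSet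
  have hroots : ∀ x ∈ Set.Ioo (-1:ℝ) 1, p.eval x = 0 := by
    intro x hx
    by_contra hfx
    have hUopen : IsOpen ({x : ℝ | p.eval x * p.eval x ≠ 0} ∩ Set.Ioo (-1:ℝ) 1) :=
      (isOpen_compl_iff.mpr (isClosed_eq hcont continuous_const)).inter isOpen_Ioo
    have hne : ({x : ℝ | p.eval x * p.eval x ≠ 0} ∩ Set.Ioo (-1:ℝ) 1).Nonempty :=
      ⟨x, by simp [mul_self_eq_zero, hfx], hx⟩
    have hpos := hUopen.measure_pos volume hne
    have hsub : ({x : ℝ | p.eval x * p.eval x ≠ 0} ∩ Set.Ioo (-1:ℝ) 1)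
        ⊆ ({x : ℝ | p.eval x * p.eval x ≠ 0} ∩ Set.Ioc (-1:ℝ) 1) :=
      Set.inter_subset_inter_right _ Set.Ioo_subset_Ioc_self
    have := measure_mono_null hsub hmeas
    exact hpos.ne' this
  apply hp
  apply Polynomial.eq_zero_of_infinite_isRoot
  have hIoo : (Set.Ioo (-1:ℝ) 1).Infinite := Set.Ioo_infinite (by norm_num : (-1:ℝ) < 1)
  exact hIoo.mono (fun x hx => hroots x hx)

lemma legendre_zero_eq : legendre 0 = 1 := by
  unfold legendre; simp

lemma exists_legendre_expansion (m : ℕ) : ∀ p : Polynomial ℝ, p.natDegree ≤ m →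
    ∃ f : ℕ → ℝ, p = ∑ k ∈ Finset.range (m+1), C (f k) * legendre k := by
  induction m with
  | zero =>
    intro p hp
    refine ⟨fun _ => p.coeff 0, ?_⟩
    rw [Finset.sum_range_one, legendre_zero_eq, mul_one]
    exact Polynomial.eq_C_of_natDegree_le_zero hp
  | succ m ih =>
    intro p hp
    set a := p.coeff (m+1) / (legendre (m+1)).coeff (m+1) with ha
    have hq : (p - C a * legendre (m+1)).natDegree ≤ m := by
      rw [Polynomial.natDegree_le_iff_coeff_eq_zero]
      intro j hj
      rcases Nat.lt_or_ge (m+1) j with hj2 | hj2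
      · rw [Polynomial.coeff_sub, Polynomial.coeff_C_mul,
          Polynomial.coeff_eq_zero_of_natDegree_lt (lt_of_le_of_lt hp hj2),
          Polynomial.coeff_eq_zero_of_natDegree_lt (lt_of_le_of_lt (legendre_natDegree_le (m+1)) hj2)]
        ring
      · have hj3 : j = m+1 := by omega
        subst hj3
        rw [Polynomial.coeff_sub, Polynomial.coeff_C_mul, ha,
          div_mul_cancel₀ _ (legendre_coeff_top_ne (m+1)), sub_self]
    obtain ⟨f, hf⟩ := ih _ hq
    refine ⟨Function.update f (m+1) a, ?_⟩
    rw [Finset.sum_range_succ]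
    have h1 : ∀ k ∈ Finset.range (m+1), C (Function.update f (m+1) a k) * legendre k
        = C (f k) * legendre k := by
      intro k hk
      have : k ≠ m+1 := by have := Finset.mem_range.mp hk; omega
      rw [Function.update_of_ne this]
    rw [Finset.sum_congr rfl h1, ← hf, Function.update_self]
    ring

lemma Lint_sum_right (p : Polynomial ℝ) (s : Finset ℕ) (g : ℕ → Polynomial ℝ) :
    Lint p (∑ k ∈ s, g k) = ∑ k ∈ s, Lint p (g k) := by
  simp only [Lint_def]
  rw [← intervalIntegral.integral_finset_sum]
  · congr 1; ext x; rw [eval_finset_sum, Finset.mul_sum]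
  · intro k _; exact poly_ii2 p (g k) _ _

lemma eq_zero_of_orth (m : ℕ) (p : Polynomial ℝ) (hdeg : p.natDegree ≤ m)
    (h : ∀ k, k ≤ m → Lint p (legendre k) = 0) : p = 0 := by
  obtain ⟨f, hf⟩ := exists_legendre_expansion m p hdeg
  apply eq_zero_of_Lint_self
  conv_lhs => rw [hf]
  rw [Lint_comm, Lint_sum_right]
  apply Finset.sum_eq_zero
  intro k hk
  rw [Lint_C_mul_right, ← hf, h k (Nat.lt_succ_iff.mp (Finset.mem_range.mp hk))]
  ring

lemma legendre_orth' (a b : ℕ) (hab : a ≠ b) : Lint (legendre a) (legendre b) = 0 := by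
  rcases Nat.lt_or_ge a b with h | h
  · rw [Lint_comm]
    exact legendre_orth b (legendre a) (by simp [legendre_natDegree]; omega)
  · exact legendre_orth a (legendre b) (by simp [legendre_natDegree]; omega)

lemma lead_cancel (n : ℕ) :
    ((n:ℝ)+2) * (legendre (n+2)).coeff (n+2) = (2*(n:ℝ)+3) * (legendre (n+1)).coeff (n+1) := by
  rw [legendre_coeff_top, legendre_coeff_top]
  have e1 : (2*(n+2)).factorial = (2*(n+2)) * ((2*(n+1)+1) * (2*(n+1)).factorial) := by
    rw [show 2*(n+2) = (2*(n+1)+1)+1 by ring, Nat.factorial_succ, Nat.factorial_succ]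
  have e2 : (n+2).factorial = (n+2) * (n+1).factorial := Nat.factorial_succ (n+1)
  rw [e1, e2]
  have hne1 : ((n+1).factorial : ℝ) ≠ 0 := Nat.cast_ne_zero.mpr (Nat.factorial_ne_zero _)
  have hne3 : (2:ℝ)^(n+1) ≠ 0 := by positivity
  have hne4 : ((n:ℝ)+2) ≠ 0 := by positivity
  rw [pow_succ (2:ℝ) (n+1)]
  push_cast
  field_simp
  ring

lemma legendre_rec (n : ℕ) :
    C (2*(n:ℝ)+3) * (X * legendre (n+1)) = C ((n:ℝ)+2) * legendre (n+2) + C ((n:ℝ)+1) * legendre n := by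
  set R : Polynomial ℝ := C ((n:ℝ)+2) * legendre (n+2) - C (2*(n:ℝ)+3) * (X * legendre (n+1))
      + C ((n:ℝ)+1) * legendre n with hR
  have hXdeg : ∀ (m j : ℕ), m < j → ((X : Polynomial ℝ) * legendre m).coeff j = (legendre m).coeff (j-1) := by
    intro m j hj
    rcases j with _ | j'
    · omega
    · rw [Polynomial.coeff_X_mul]; rfl
  have hRdeg : R.natDegree ≤ n+1 := by
    rw [Polynomial.natDegree_le_iff_coeff_eq_zero]
    intro j hj
    rw [hR, Polynomial.coeff_add, Polynomial.coeff_sub, Polynomial.coeff_C_mul,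
      Polynomial.coeff_C_mul, Polynomial.coeff_C_mul,
      hXdeg (n+1) j (by omega)]
    rcases Nat.lt_or_ge (n+2) j with hj2 | hj2
    · rw [Polynomial.coeff_eq_zero_of_natDegree_lt (lt_of_le_of_lt (legendre_natDegree_le (n+2)) hj2),
        Polynomial.coeff_eq_zero_of_natDegree_lt
          (lt_of_le_of_lt (legendre_natDegree_le (n+1)) (by omega : n+1 < j-1)),
        Polynomial.coeff_eq_zero_of_natDegree_lt (lt_of_le_of_lt (legendre_natDegree_le n) (by omega))]
      ring
    · have hj3 : j = n+2 := by omega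
      subst hj3
      rw [show n+2-1 = n+1 by omega,
        Polynomial.coeff_eq_zero_of_natDegree_lt (lt_of_le_of_lt (legendre_natDegree_le n) (by omega))]
      have := lead_cancel n
      rw [mul_zero, add_zero]
      linarith
  have horth : ∀ k, k < n → Lint R (legendre k) = 0 := by
    intro k hk
    rw [hR, Lint_add_left, Lint_sub_left, Lint_C_mul_left, Lint_C_mul_left, Lint_C_mul_left]
    rw [legendre_orth' (n+2) k (by omega), legendre_orth' n k (by omega)]
    rw [Lint_mul_assoc]
    have hdeg : ((X : Polynomial ℝ) * legendre k).natDegree < n+1 := by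
      refine lt_of_le_of_lt (Polynomial.natDegree_mul_le) ?_
      rw [Polynomial.natDegree_X, legendre_natDegree]; omega
    rw [legendre_orth (n+1) _ hdeg]
    ring
  set r : ℝ := Lint R (legendre n) / Lint (legendre n) (legendre n) with hr
  set s : ℝ := Lint R (legendre (n+1)) / Lint (legendre (n+1)) (legendre (n+1)) with hs
  have hNn : Lint (legendre n) (legendre n) ≠ 0 := by
    rw [legendre_norm]; positivity
  have hNn1 : Lint (legendre (n+1)) (legendre (n+1)) ≠ 0 := by
    rw [legendre_norm]; positivity
  set S : Polynomial ℝ := R - C r * legendre n - C s * legendre (n+1) with hS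
  have hSdeg : S.natDegree ≤ n+1 := by
    rw [hS]
    refine le_trans (Polynomial.natDegree_sub_le _ _) (max_le ?_ ?_)
    · refine le_trans (Polynomial.natDegree_sub_le _ _) (max_le hRdeg ?_)
      exact le_trans (Polynomial.natDegree_C_mul_le _ _) (by simp [legendre_natDegree])
    · exact le_trans (Polynomial.natDegree_C_mul_le _ _) (by simp [legendre_natDegree])
  have hSorth : ∀ k, k ≤ n+1 → Lint S (legendre k) = 0 := by
    intro k hk
    rw [hS, Lint_sub_left, Lint_sub_left, Lint_C_mul_left, Lint_C_mul_left]
    rcases Nat.lt_or_ge k n with hkn | hkn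
    · rw [horth k hkn, legendre_orth' n k (by omega), legendre_orth' (n+1) k (by omega)]
      ring
    · rcases (by omega : k = n ∨ k = n+1) with hkeq | hkeq
      · subst hkeq
        rw [legendre_orth' (k+1) k (by omega), hr, div_mul_cancel₀ _ hNn]
        ring
      · subst hkeq
        rw [legendre_orth' n (n+1) (by omega), hs, div_mul_cancel₀ _ hNn1]
        ring
  have hS0 : S = 0 := eq_zero_of_orth (n+1) S hSdeg hSorth
  have hRe : R = C r * legendre n + C s * legendre (n+1) := by
    rw [hS, sub_sub, sub_eq_zero] at hS0
    exact hS0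
  have hv1 : R.eval 1 = 0 := by
    rw [hR]
    simp [legendre_eval_one]
    ring
  have hv2 : R.eval (-1) = 0 := by
    rw [hR]
    simp [legendre_eval_neg_one, pow_succ]
    ring
  have he1 : r + s = 0 := by
    have := congrArg (Polynomial.eval 1) hRe
    rw [hv1] at this
    simp [legendre_eval_one] at this
    linarith
  have he2 : r * (-1:ℝ)^n - s * (-1:ℝ)^n = 0 := by
    have := congrArg (Polynomial.eval (-1)) hRe
    rw [hv2] at this
    simp [legendre_eval_neg_one, pow_succ] at this
    linarith
  have hrs : r = s := by
    have h3 : (r - s) * (-1:ℝ)^n = 0 := by ring_nf; ring_nf at he2; linarith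
    rcases mul_eq_zero.mp h3 with h4 | h4
    · linarith [sub_eq_zero.mp h4]
    · exact absurd h4 (pow_ne_zero n (by norm_num))
  have hr0 : r = 0 := by linarith
  have hs0 : s = 0 := by linarith
  have hR0 : R = 0 := by
    rw [hRe, hr0, hs0]
    simp
  have h0 : C ((n:ℝ)+2) * legendre (n+2) - C (2*(n:ℝ)+3) * (X * legendre (n+1))
      + C ((n:ℝ)+1) * legendre n = 0 := by rw [← hR]; exact hR0
  linear_combination -h0

lemma chi_natDegree (i : ℕ) : (chi i).natDegree = i + 2 := by
  apply le_antisymm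
  · exact le_trans (Polynomial.natDegree_sub_le _ _)
      (max_le (le_trans (legendre_natDegree_le i) (by omega)) (legendre_natDegree_le (i+2)))
  · apply Polynomial.le_natDegree_of_ne_zero
    rw [chi, Polynomial.coeff_sub,
      Polynomial.coeff_eq_zero_of_natDegree_lt (lt_of_le_of_lt (legendre_natDegree_le i) (by omega))]
    simpa using legendre_coeff_top_ne (i+2)

lemma chi_eval_neg_one (i : ℕ) : (chi i).eval (-1) = 0 := by
  rw [chi, eval_sub, legendre_eval_neg_one, legendre_eval_neg_one, pow_succ, pow_succ]
  ring

lemma chi_factor (i : ℕ) : ∃ q : Polynomial ℝ, chi i = (X - C (-1)) * q ∧ q.natDegree = i+1 := by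
  obtain ⟨q, hq⟩ := Polynomial.dvd_iff_isRoot.mpr (chi_eval_neg_one i)
  refine ⟨q, hq, ?_⟩
  have hchi0 : chi i ≠ 0 := by
    intro h
    have := chi_natDegree i
    rw [h, Polynomial.natDegree_zero] at this
    omega
  have hq0 : q ≠ 0 := by
    intro h
    rw [h, mul_zero] at hq
    exact hchi0 hq
  have hd := chi_natDegree i
  rw [hq, Polynomial.natDegree_mul (Polynomial.X_sub_C_ne_zero (-1)) hq0,
    Polynomial.natDegree_X_sub_C] at hd
  omega

lemma Lint_chi_ne (i m : ℕ) (h1 : m ≠ i) (h2 : m ≠ i+2) : Lint (chi i) (legendre m) = 0 := by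
  rw [chi, Lint_sub_left, legendre_orth' i m (by omega), legendre_orth' (i+2) m (by omega), sub_zero]

lemma Lint_chi_self (i : ℕ) : Lint (chi i) (legendre i) = 2/(2*(i:ℝ)+1) := by
  rw [chi, Lint_sub_left, legendre_norm, legendre_orth' (i+2) i (by omega), sub_zero]

lemma Lint_chi_top (i : ℕ) : Lint (chi i) (legendre (i+2)) = -(2/(2*(i:ℝ)+5)) := by
  rw [chi, Lint_sub_left, legendre_orth' i (i+2) (by omega), legendre_norm, zero_sub]
  push_cast
  ring_nf

lemma step (i : ℕ) (q : Polynomial ℝ) (hq : chi i = (X - C (-1)) * q) (k : ℕ) :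
    ((k:ℝ)+2) * Lint q (legendre (k+2)) + (2*(k:ℝ)+3) * Lint q (legendre (k+1))
      + ((k:ℝ)+1) * Lint q (legendre k)
      = (2*(k:ℝ)+3) * Lint (chi i) (legendre (k+1)) := by
  have h1 : Lint (chi i) (legendre (k+1)) = Lint q ((X - C (-1)) * legendre (k+1)) := by
    rw [hq, Lint_mul_assoc]
  have h2 : (X - C (-1)) * legendre (k+1) = X * legendre (k+1) + legendre (k+1) := by
    simp; ring
  have h3 : (2*(k:ℝ)+3) * Lint q (X * legendre (k+1))
      = ((k:ℝ)+2) * Lint q (legendre (k+2)) + ((k:ℝ)+1) * Lint q (legendre k) := by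
    rw [← Lint_C_mul_right, legendre_rec k, Lint_add_right, Lint_C_mul_right, Lint_C_mul_right]
  rw [h1, h2, Lint_add_right]
  ring_nf
  ring_nf at h3
  linarith

lemma bMat_eq (i j : ℕ) (q : Polynomial ℝ) (hq : chi j = (X - C (-1)) * q) :
    bMat i j = Lint q (chi i)
    ∧ IntervalIntegrable (fun x : ℝ => (x + 1)⁻¹ * (chi j).eval x * (chi i).eval x) volume (-1) 1 := by
  have hne : ∀ᵐ (x : ℝ) ∂volume, x ≠ -1 := by
    rw [MeasureTheory.ae_iff]
    have h : {x : ℝ | ¬ x ≠ -1} = {-1} := by ext x; simp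
    rw [h]
    exact measure_singleton _
  have hae : (fun x : ℝ => (x + 1)⁻¹ * (chi j).eval x * (chi i).eval x)
      =ᵐ[volume] fun x => q.eval x * (chi i).eval x := by
    filter_upwards [hne] with x hx
    have hx1 : x + 1 ≠ 0 := by intro h; apply hx; linarith
    rw [hq]
    simp only [eval_mul, eval_sub, eval_X, eval_C, sub_neg_eq_add]
    field_simp
  have hc : IntervalIntegrable (fun x => q.eval x * (chi i).eval x) volume (-1) 1 :=
    poly_ii2 q (chi i) _ _
  constructor
  · rw [bMat, intervalIntegral.integral_congr_ae (hae.mono fun x hx _ => hx), Lint_def]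
  · exact hc.congr_ae (hae.symm.filter_mono (MeasureTheory.ae_mono MeasureTheory.Measure.restrict_le_self))

lemma bMat_eq' (i j : ℕ) (q : Polynomial ℝ) (hq : chi i = (X - C (-1)) * q) :
    bMat i j = Lint q (chi j) := by
  have hne : ∀ᵐ (x : ℝ) ∂volume, x ≠ -1 := by
    rw [MeasureTheory.ae_iff]
    have h : {x : ℝ | ¬ x ≠ -1} = {-1} := by ext x; simp
    rw [h]
    exact measure_singleton _
  have hae : (fun x : ℝ => (x + 1)⁻¹ * (chi j).eval x * (chi i).eval x)
      =ᵐ[volume] fun x => q.eval x * (chi j).eval x := by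
    filter_upwards [hne] with x hx
    have hx1 : x + 1 ≠ 0 := by intro h; apply hx; linarith
    rw [hq]
    simp only [eval_mul, eval_sub, eval_X, eval_C, sub_neg_eq_add]
    field_simp
  rw [bMat, intervalIntegral.integral_congr_ae (hae.mono fun x hx _ => hx), Lint_def]

lemma Lint_q_chi (q : Polynomial ℝ) (m : ℕ) :
    Lint q (chi m) = Lint q (legendre m) - Lint q (legendre (m+2)) := by
  rw [chi, Lint_sub_right]

lemma Lint_q_zero (q : Polynomial ℝ) (d m : ℕ) (hdeg : q.natDegree = d) (hm : d < m) :
    Lint q (legendre m) = 0 := by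
  rw [Lint_comm]
  exact legendre_orth m q (by omega)

theorem singular_mass_entries' (i j : ℕ) :
    IntervalIntegrable (fun x : ℝ => (x + 1)⁻¹ * (chi j).eval x * (chi i).eval x)
      MeasureTheory.volume (-1) 1 ∧
    bMat i i = 2 * (2 * (i : ℝ) + 3) / (((i : ℝ) + 1) * ((i : ℝ) + 2)) ∧
    bMat i (i + 1) = -2 / ((i : ℝ) + 2) ∧
    (2 ≤ |(i : ℤ) - (j : ℤ)| → bMat i j = 0) := by
  have hne1 : ((i:ℝ)+1) ≠ 0 := by positivity
  have hne2 : ((i:ℝ)+2) ≠ 0 := by positivity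
  have hne3 : ((i:ℝ)+3) ≠ 0 := by positivity
  obtain ⟨qj, hqj, hqjdeg⟩ := chi_factor j
  refine ⟨(bMat_eq i j qj hqj).2, ?_, ?_, ?_⟩
  · -- diagonal entry
    obtain ⟨q, hq, hqdeg⟩ := chi_factor i
    have hz2 : Lint q (legendre (i+2)) = 0 := Lint_q_zero q (i+1) (i+2) hqdeg (by omega)
    have hz3 : Lint q (legendre (i+3)) = 0 := Lint_q_zero q (i+1) (i+3) hqdeg (by omega)
    have s1 := step i q hq (i+1)
    simp only [show i+1+1 = i+2 from rfl, show i+1+2 = i+3 from rfl] at s1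
    rw [hz2, hz3, Lint_chi_top i] at s1
    push_cast at s1
    have e5 : (2*(i:ℝ)+5) * (2/(2*(i:ℝ)+5)) = 2 := by
      field_simp
    have s1'' : Lint q (legendre (i+1)) * ((i:ℝ)+2) = -2 := by nlinarith [s1, e5]
    have s0 := step i q hq i
    rw [hz2, Lint_chi_ne i (i+1) (by omega) (by omega)] at s0
    push_cast at s0
    rw [(bMat_eq i i q hq).1, Lint_q_chi, hz2, sub_zero, eq_div_iff (by positivity)]
    linear_combination (-(2*(i:ℝ)+3))*s1'' + ((i:ℝ)+2)*s0
  · -- superdiagonal entry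
    obtain ⟨q, hq, hqdeg⟩ := chi_factor (i+1)
    have hz3 : Lint q (legendre (i+3)) = 0 := Lint_q_zero q (i+2) (i+3) hqdeg (by omega)
    have hz4 : Lint q (legendre (i+4)) = 0 := Lint_q_zero q (i+2) (i+4) hqdeg (by omega)
    have hct3 : Lint (chi (i+1)) (legendre (i+3)) = -(2/(2*(i:ℝ)+7)) := by
      have h := Lint_chi_top (i+1)
      push_cast at h
      rw [show 2*((i:ℝ)+1)+5 = 2*(i:ℝ)+7 by ring] at h
      exact h
    have hcs : Lint (chi (i+1)) (legendre (i+1)) = 2/(2*(i:ℝ)+3) := by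
      have h := Lint_chi_self (i+1)
      push_cast at h
      rw [show 2*((i:ℝ)+1)+1 = 2*(i:ℝ)+3 by ring] at h
      exact h
    have hcn : Lint (chi (i+1)) (legendre (i+2)) = 0 :=
      Lint_chi_ne (i+1) (i+2) (by omega) (by omega)
    set u2 := Lint q (legendre (i+2)) with hu2def
    set u1 := Lint q (legendre (i+1)) with hu1def
    set u0 := Lint q (legendre i) with hu0def
    have t1 := step (i+1) q hq (i+2)
    simp only [show i+2+2 = i+4 from rfl, show i+2+1 = i+3 from rfl] at t1
    rw [hz3, hz4, hct3] at t1
    push_cast at t1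
    rw [← hu2def] at t1
    have e7 : (2*(i:ℝ)+7) * (2/(2*((i:ℝ))+7)) = 2 := by field_simp
    have hu2' : u2 * ((i:ℝ)+3) = -2 := by nlinarith [t1, e7]
    have t2 := step (i+1) q hq (i+1)
    simp only [show i+1+1 = i+2 from rfl, show i+1+2 = i+3 from rfl] at t2
    rw [hz3, hcn] at t2
    push_cast at t2
    rw [← hu2def, ← hu1def] at t2
    have hu1' : u1 * (((i:ℝ)+2)*((i:ℝ)+3)) = 2*(2*(i:ℝ)+5) := by
      linear_combination ((i:ℝ)+3)*t2 + (-(2*(i:ℝ)+5))*hu2'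
    have t3 := step (i+1) q hq i
    rw [hcs] at t3
    push_cast at t3
    rw [← hu2def, ← hu1def, ← hu0def] at t3
    have e3 : (2*(i:ℝ)+3) * (2/(2*(i:ℝ)+3)) = 2 := by field_simp
    have t3' : ((i:ℝ)+2)*u2 + (2*(i:ℝ)+3)*u1 + ((i:ℝ)+1)*u0 = 2 := by nlinarith [t3, e3]
    have hu0' : u0 * (((i:ℝ)+1)*(((i:ℝ)+2)*((i:ℝ)+3))) = -2*((i:ℝ)+1)*(2*(i:ℝ)+5) := by
      linear_combination (((i:ℝ)+2)*((i:ℝ)+3))*t3' + (-(2*(i:ℝ)+3))*hu1' + (-(((i:ℝ)+2)*((i:ℝ)+2)))*hu2'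
    have hu0 : u0 = -2*(2*(i:ℝ)+5)/(((i:ℝ)+2)*((i:ℝ)+3)) := by
      rw [eq_div_iff (by positivity)]
      apply mul_left_cancel₀ hne1
      linear_combination hu0'
    have hu2 : u2 = -2/((i:ℝ)+3) := by
      rw [eq_div_iff hne3]
      linarith [hu2']
    rw [(bMat_eq i (i+1) q hq).1, Lint_q_chi, ← hu0def, ← hu2def, hu0, hu2]
    field_simp
    ring
  · -- far off-diagonal
    intro habs
    have hcase : j + 2 ≤ i ∨ i + 2 ≤ j := by
      rcases abs_cases ((i:ℤ) - (j:ℤ)) with ⟨h1, _⟩ | ⟨h1, _⟩ <;> omega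
    rcases hcase with hc | hc
    · rw [(bMat_eq i j qj hqj).1, Lint_q_chi,
        Lint_q_zero qj (j+1) i hqjdeg (by omega),
        Lint_q_zero qj (j+1) (i+2) hqjdeg (by omega), sub_zero]
    · obtain ⟨q, hq, hqdeg⟩ := chi_factor i
      rw [bMat_eq' i j q hq, Lint_q_chi,
        Lint_q_zero q (i+1) j hqdeg (by omega),
        Lint_q_zero q (i+1) (j+2) hqdeg (by omega), sub_zero]

end SME

theorem singular_mass_entries (i j : ℕ) :
    IntervalIntegrable (fun x : ℝ => (x + 1)⁻¹ * (chi j).eval x * (chi i).eval x)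
      MeasureTheory.volume (-1) 1 ∧
    bMat i i = 2 * (2 * (i : ℝ) + 3) / (((i : ℝ) + 1) * ((i : ℝ) + 2)) ∧
    bMat i (i + 1) = -2 / ((i : ℝ) + 2) ∧
    (2 ≤ |(i : ℤ) - (j : ℤ)| → bMat i j = 0) := by
  exact SME.singular_mass_entries' i j
end
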